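/- For any digraph D on m vertices (m ≥ 1), there exists a digraph G containing D as an induced subdigraph with metric dimension β(G) ≤ ⌈log₂ m⌉. Concretely, G is obtained from D by adding k = ⌈log₂ m⌉ new vertices v₁,…,v_k, where the vertices of D are labeled by distinct binary strings of length k, and v_i has an arc to exactly those vertices of D whose label has a 0 in coordinate i; then the set {v₁,…,v_k} resolves G. -/

import Mathlib

/-- A directed walk of length `n` from `u` to `v` along the arc relation `A`. -/
def IsDWalk {V : Type*} (A : V → V → Prop) {n : ℕ} (f : Fin (n + 1) → V) (u v : V) : Prop :=
  f 0 = u ∧ f (Fin.last n) = v ∧ ∀ i : Fin n, A (f i.castSucc) (f i.succ)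

/-- Directed distance: the length of a shortest directed path from `u` to `v`,
`⊤` (infinity) if there is no directed path. -/
noncomputable def ddist {V : Type*} (A : V → V → Prop) (u v : V) : ℕ∞ :=
  sInf {m : ℕ∞ | ∃ (n : ℕ) (f : Fin (n + 1) → V), IsDWalk A f u v ∧ m = (n : ℕ∞)}

section Aux

variable {V : Type*} {A : V → V → Prop}

lemma ddist_self (u : V) : ddist A u u = 0 := by
  refine le_antisymm ?_ (zero_le)
  apply sInf_le
  exact ⟨0, fun _ => u, ⟨rfl, rfl, fun i => i.elim0⟩, rfl⟩

lemma eq_of_ddist_eq_zero {u v : V} (h : ddist A u v = 0) : u = v := by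
  have h1 : ddist A u v < 1 := by rw [h]; exact zero_lt_one
  rw [ddist, sInf_lt_iff] at h1
  obtain ⟨a, ⟨n, f, hw, rfl⟩, ha⟩ := h1
  have hn : n = 0 := by exact_mod_cast Nat.lt_one_iff.mp (by exact_mod_cast ha)
  subst hn
  rw [← hw.1, ← hw.2.1]
  rfl

lemma ddist_le_one_of_adj {u v : V} (h : A u v) : ddist A u v ≤ 1 := by
  apply sInf_le
  refine ⟨1, ![u, v], ⟨rfl, rfl, ?_⟩, rfl⟩
  intro i
  fin_cases i
  simpa using h

lemma adj_of_ddist_lt_two {u v : V} (hne : u ≠ v) (h : ddist A u v < 2) : A u v := by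
  rw [ddist, sInf_lt_iff] at h
  obtain ⟨a, ⟨n, f, hw, rfl⟩, ha⟩ := h
  have hn : n < 2 := by exact_mod_cast ha
  interval_cases n
  · exact absurd (hw.1.symm.trans hw.2.1) hne
  · have := hw.2.2 0
    rw [show ((0 : Fin 1).castSucc) = 0 from rfl, show ((0 : Fin 1).succ) = Fin.last 1 from rfl,
      hw.1, hw.2.1] at this
    exact this

lemma ddist_eq_top_of_no_in {u v : V} (h : ∀ a, ¬ A a v) (hne : u ≠ v) : ddist A u v = ⊤ := by
  rw [ddist, show {m : ℕ∞ | ∃ (n : ℕ) (f : Fin (n + 1) → V), IsDWalk A f u v ∧ m = (n : ℕ∞)} = ∅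
    from ?_, sInf_empty]
  rw [Set.eq_empty_iff_forall_notMem]
  rintro a ⟨n, f, hw, rfl⟩
  cases n with
  | zero => exact hne (hw.1.symm.trans hw.2.1)
  | succ n =>
    have := hw.2.2 (Fin.last n)
    rw [Fin.succ_last, hw.2.1] at this
    exact h _ this

lemma key {V : Type*} {k : ℕ} (label : V → Fin k → Bool) (hlabel : Function.Injective label)
    (A : V ⊕ Fin k → V ⊕ Fin k → Prop)
    (h1 : ∀ i v, A (Sum.inr i) (Sum.inl v) ↔ label v i = false)
    (x y : V ⊕ Fin k) (h : ∀ i, ddist A (Sum.inr i) x = ddist A (Sum.inr i) y) : x = y := by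
  have hdist : ∀ (i : Fin k) (v : V), (ddist A (Sum.inr i) (Sum.inl v) = 1 ↔ label v i = false) := by
    intro i v
    constructor
    · intro hd
      exact (h1 i v).mp (adj_of_ddist_lt_two (by simp) (by rw [hd]; norm_num))
    · intro hl
      refine le_antisymm (ddist_le_one_of_adj ((h1 i v).mpr hl)) ?_
      rw [ENat.one_le_iff_ne_zero]
      intro h0
      exact absurd (eq_of_ddist_eq_zero h0) (by simp)
  match x, y with
  | Sum.inl u, Sum.inl v =>
    have : label u = label v := by
      funext i
      have hb : (label u i = false) ↔ (label v i = false) := by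
        rw [← hdist i u, ← hdist i v, h i]
      revert hb
      cases label u i <;> cases label v i <;> simp
    rw [hlabel this]
  | Sum.inl u, Sum.inr j =>
    have hj := h j
    rw [ddist_self] at hj
    exact absurd (eq_of_ddist_eq_zero hj) (by simp)
  | Sum.inr i, Sum.inl v =>
    have hi := h i
    rw [ddist_self] at hi
    exact absurd (eq_of_ddist_eq_zero hi.symm) (by simp)
  | Sum.inr i, Sum.inr j =>
    have hi := h i
    rw [ddist_self] at hi
    exact eq_of_ddist_eq_zero hi.symm

end Aux

/-- For any digraph `D` on `m ≥ 1` vertices, the digraph `G` obtained by adding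
`k = ⌈log₂ m⌉` new vertices `v₁, …, v_k`, labelling the vertices of `D` by distinct
binary strings of length `k`, and putting an arc from `vᵢ` to exactly those vertices of
`D` whose label has a `0` (i.e. `false`) in coordinate `i`, has `{v₁, …, v_k}` as a
resolving set; hence `β(G) ≤ ⌈log₂ m⌉`. -/
theorem embed_with_log_metric_dim {V : Type*} [Fintype V] (D : V → V → Prop)
    (m : ℕ) (hm : 1 ≤ m) (hcard : Fintype.card V = m)
    (k : ℕ) (hk : k = Nat.clog 2 m)
    (label : V → Fin k → Bool) (hlabel : Function.Injective label) :
    ∀ x y : V ⊕ Fin k,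
      (∀ i : Fin k,
        ddist (fun a b : V ⊕ Fin k =>
          match a, b with
          | Sum.inl u, Sum.inl v => D u v
          | Sum.inr i, Sum.inl v => label v i = false
          | _, _ => False) (Sum.inr i) x =
        ddist (fun a b : V ⊕ Fin k =>
          match a, b with
          | Sum.inl u, Sum.inl v => D u v
          | Sum.inr i, Sum.inl v => label v i = false
          | _, _ => False) (Sum.inr i) y) → x = y := by
  intro x y h
  exact key label hlabel _ (fun i v => Iff.rfl) x y h
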